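/- Let n ≥ 2, let X_1,…,X_{n+1} ∈ ℝ and Y_1,…,Y_n ∈ ℝ, and for a provisional value y ∈ ℝ set Y_{n+1} = y and define μ_i(y) = (Σ_{j=1}^{n+1} X_j) + min_{j ∈ {1,…,n+1}, j ≠ i} Y_j + Y_i for i = 1,…,n+1. For i ∈ {1,…,n} let m_i = min_{j ∈ {1,…,n}, j ≠ i} Y_j and a_i = Y_i + m_i − min{Y_1,…,Y_n}. Then (a) a_i = max(Y_i, m_i) for each i ≤ n; and (b) for every α ∈ (0,1) with (n+1)α not an integer and r := ⌊(n+1)α⌋ satisfying 1 ≤ r ≤ n, the conformal prediction region {y ∈ ℝ : #{i ∈ {1,…,n+1} : μ_i(y) ≥ μ_{n+1}(y)} > (n+1)α} equals the one-sided interval {y ∈ ℝ : y ≤ a_{(n+1−r)}}, where a_{(k)} denotes the k-th smallest value among a_1,…,a_n. -/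

import Mathlib

lemma erase_last_eq (n : ℕ) :
    ((Finset.univ : Finset (Fin (n+1))).erase (Fin.last n)) =
      Finset.univ.map Fin.castSuccEmb := by
  ext j
  simp only [Finset.mem_erase, Finset.mem_univ, and_true, Finset.mem_map, true_and,
    Fin.coe_castSuccEmb]
  constructor
  · intro h
    rcases Fin.eq_castSucc_or_eq_last j with ⟨i, rfl⟩ | rfl
    · exact ⟨i, rfl⟩
    · exact absurd rfl h
  · rintro ⟨i, rfl⟩
    exact (Fin.castSucc_lt_last i).ne

lemma erase_castSucc_eq (n : ℕ) (k : Fin n) :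
    ((Finset.univ : Finset (Fin (n+1))).erase (Fin.castSucc k)) =
      insert (Fin.last n) ((Finset.univ.erase k).map Fin.castSuccEmb) := by
  ext j
  simp only [Finset.mem_erase, Finset.mem_univ, and_true, Finset.mem_insert, Finset.mem_map,
    Fin.coe_castSuccEmb, true_and]
  rcases Fin.eq_castSucc_or_eq_last j with ⟨i, rfl⟩ | rfl
  · constructor
    · intro h
      exact Or.inr ⟨i, fun hik => h (by rw [hik]), rfl⟩
    · rintro ((h : Fin.castSucc i = Fin.last n) | ⟨x, hx, h⟩)
      · exact absurd h (Fin.castSucc_lt_last i).ne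
      · rw [Fin.castSucc_inj] at h
        subst h
        exact fun hh => hx (Fin.castSucc_inj.mp hh)
  · simp [(Fin.castSucc_lt_last k).ne']

lemma aux_ineq (u v y : ℝ) : u ⊓ v + y ≤ y ⊓ v + u ↔ y ≤ max u v := by
  rcases le_total y v with h | h <;> rcases le_total u v with h2 | h2 <;>
    rcases le_total u y with h3 | h3 <;>
    simp [min_def, max_def, h, h2, h3] <;>
  first
    | linarith
    | (constructor <;> intro <;> linarith)

lemma inf'_univ_min {n : ℕ} (Y : Fin n → ℝ) (k : Fin n)
    (h : (Finset.univ : Finset (Fin n)).Nonempty)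
    (h' : ((Finset.univ : Finset (Fin n)).erase k).Nonempty) :
    Finset.univ.inf' h Y = Y k ⊓ (Finset.univ.erase k).inf' h' Y := by
  calc Finset.univ.inf' h Y
      = (insert k (Finset.univ.erase k)).inf' (Finset.insert_nonempty _ _) Y :=
        Finset.inf'_congr h (Finset.insert_erase (Finset.mem_univ k)).symm (fun _ _ => rfl)
    _ = Y k ⊓ (Finset.univ.erase k).inf' h' Y := Finset.inf'_insert h' Y

lemma infZ_last {n : ℕ} (Y : Fin n → ℝ) (y : ℝ)
    (h : ((Finset.univ : Finset (Fin (n+1))).erase (Fin.last n)).Nonempty)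
    (h2 : (Finset.univ : Finset (Fin n)).Nonempty) :
    ((Finset.univ : Finset (Fin (n+1))).erase (Fin.last n)).inf' h (Fin.snoc Y y)
      = Finset.univ.inf' h2 Y := by
  calc ((Finset.univ : Finset (Fin (n+1))).erase (Fin.last n)).inf' h (Fin.snoc Y y)
      = (Finset.univ.map Fin.castSuccEmb).inf' (by rwa [← erase_last_eq n]) (Fin.snoc Y y) :=
        Finset.inf'_congr h (erase_last_eq n) (fun _ _ => rfl)
    _ = Finset.univ.inf' h2 ((Fin.snoc Y y : Fin (n+1) → ℝ) ∘ Fin.castSuccEmb) :=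
        Finset.inf'_map _ _
    _ = Finset.univ.inf' h2 Y :=
        Finset.inf'_congr h2 rfl (fun x _ => by exact Fin.snoc_castSucc ..)

lemma infZ_castSucc {n : ℕ} (Y : Fin n → ℝ) (y : ℝ) (k : Fin n)
    (h : ((Finset.univ : Finset (Fin (n+1))).erase (Fin.castSucc k)).Nonempty)
    (h2 : ((Finset.univ : Finset (Fin n)).erase k).Nonempty) :
    ((Finset.univ : Finset (Fin (n+1))).erase (Fin.castSucc k)).inf' h (Fin.snoc Y y)
      = y ⊓ (Finset.univ.erase k).inf' h2 Y := by
  calc ((Finset.univ : Finset (Fin (n+1))).erase (Fin.castSucc k)).inf' h (Fin.snoc Y y)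
      = (insert (Fin.last n) ((Finset.univ.erase k).map Fin.castSuccEmb)).inf'
          (Finset.insert_nonempty _ _) (Fin.snoc Y y) :=
        Finset.inf'_congr h (erase_castSucc_eq n k) (fun _ _ => rfl)
    _ = (Fin.snoc Y y : Fin (n+1) → ℝ) (Fin.last n)
          ⊓ ((Finset.univ.erase k).map Fin.castSuccEmb).inf'
              (Finset.map_nonempty.mpr h2) (Fin.snoc Y y) :=
        Finset.inf'_insert (Finset.map_nonempty.mpr h2) (Fin.snoc Y y)
    _ = y ⊓ (Finset.univ.erase k).inf' h2 ((Fin.snoc Y y : Fin (n+1) → ℝ) ∘ Fin.castSuccEmb) := by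
        rw [Fin.snoc_last, Finset.inf'_map]
    _ = y ⊓ (Finset.univ.erase k).inf' h2 Y := by
        congr 1
        exact Finset.inf'_congr h2 rfl (fun x _ => by exact Fin.snoc_castSucc ..)

/-- Example 5 of the paper (answer to Questions (V) and (VIII)): for the
non-conformity scores `μ_i(y) = (Σ_j X_j) + min_{j ≠ i} Y_j + Y_i` (with
`Y_{n+1} = y`), one has (a) `a_i = max(Y_i, m_i)`, and (b) the conformal
prediction region `{y : #{i : μ_i(y) ≥ μ_{n+1}(y)} > (n+1)α}` is the one-sided
interval `(-∞, a_{(n+1−r)}]`, where `r = ⌊(n+1)α⌋` and `a_{(k)}` is the k-th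
smallest of `a_1, …, a_n`. -/
theorem stmt_9
    (n : ℕ) (hn : 2 ≤ n)
    (X : Fin (n + 1) → ℝ) (Y : Fin n → ℝ)
    (μ : ℝ → Fin (n + 1) → ℝ)
    (hμ : ∀ (y : ℝ) (i : Fin (n + 1)),
      μ y i = (∑ j, X j)
        + (Finset.univ.erase i).inf'
            (by
              rw [← Finset.card_pos, Finset.card_erase_of_mem (Finset.mem_univ i),
                Finset.card_univ, Fintype.card_fin]
              omega) (Fin.snoc Y y : Fin (n + 1) → ℝ)
        + (Fin.snoc Y y : Fin (n + 1) → ℝ) i)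
    (m : Fin n → ℝ)
    (hm : ∀ i : Fin n,
      m i = (Finset.univ.erase i).inf'
        (by
          rw [← Finset.card_pos, Finset.card_erase_of_mem (Finset.mem_univ i),
            Finset.card_univ, Fintype.card_fin]
          omega) Y)
    (a : Fin n → ℝ)
    (ha : ∀ i : Fin n,
      a i = Y i + m i
        - Finset.univ.inf'
            (by rw [← Finset.card_pos, Finset.card_univ, Fintype.card_fin]; omega) Y) :
    (∀ i : Fin n, a i = max (Y i) (m i)) ∧
    (∀ (α : ℝ) (_ : α ∈ Set.Ioo (0 : ℝ) 1)
        (_ : ∀ k : ℤ, ((n : ℝ) + 1) * α ≠ (k : ℝ))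
        (r : ℕ) (_ : (r : ℤ) = ⌊((n : ℝ) + 1) * α⌋) (_ : 1 ≤ r) (_ : r ≤ n),
        {y : ℝ | ((n : ℝ) + 1) * α <
            ((Finset.univ.filter
              (fun i : Fin (n + 1) => μ y (Fin.last n) ≤ μ y i)).card : ℝ)}
          = Set.Iic ((a ∘ Tuple.sort a) ⟨n - r, by omega⟩)) := by
  have hnY : (Finset.univ : Finset (Fin n)).Nonempty := by
    rw [← Finset.card_pos, Finset.card_univ, Fintype.card_fin]; omega
  have herase : ∀ k : Fin n, ((Finset.univ : Finset (Fin n)).erase k).Nonempty := fun k => by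
    rw [← Finset.card_pos, Finset.card_erase_of_mem (Finset.mem_univ k),
      Finset.card_univ, Fintype.card_fin]; omega
  -- infY = min of Y
  have hmin : ∀ k : Fin n, Finset.univ.inf' hnY Y = Y k ⊓ m k := fun k => by
    rw [hm k]; exact inf'_univ_min Y k hnY (herase k)
  -- part (a)
  have parta : ∀ i : Fin n, a i = max (Y i) (m i) := by
    intro i
    have h1 : a i = Y i + m i - Finset.univ.inf' hnY Y := ha i
    rw [h1, hmin i]
    rcases le_total (Y i) (m i) with h | h <;>
      simp [min_def, max_def, h] <;> linarith
  refine ⟨parta, ?_⟩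
  intro α hα hnotint r hr hr1 hrn
  -- count lemma
  have key : ∀ y : ℝ,
      (Finset.univ.filter (fun i : Fin (n + 1) => μ y (Fin.last n) ≤ μ y i)).card
        = (Finset.univ.filter (fun i : Fin n => y ≤ a i)).card + 1 := by
    intro y
    have hlast : μ y (Fin.last n) = (∑ j, X j) + Finset.univ.inf' hnY Y + y := by
      rw [hμ y (Fin.last n), Fin.snoc_last, infZ_last Y y _ hnY]
    have hcs : ∀ k : Fin n,
        μ y (Fin.castSucc k) = (∑ j, X j) + (y ⊓ m k) + Y k := by
      intro k
      rw [hμ y (Fin.castSucc k), Fin.snoc_castSucc, infZ_castSucc Y y k _ (herase k), hm k]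
    have hiff : ∀ k : Fin n, (μ y (Fin.last n) ≤ μ y (Fin.castSucc k)) ↔ y ≤ a k := by
      intro k
      rw [hlast, hcs k, hmin k, parta k, add_assoc, add_assoc, add_le_add_iff_left]
      exact aux_ineq (Y k) (m k) y
    rw [Finset.card_filter, Finset.card_filter, Fin.sum_univ_castSucc, if_pos le_rfl]
    congr 1
    exact Finset.sum_congr rfl fun k _ => if_congr (hiff k) rfl rfl
  -- sorted version
  set σ := Tuple.sort a with hσ
  set b : Fin n → ℝ := a ∘ σ with hb
  have hmono : Monotone b := Tuple.monotone_sort a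
  set x : Fin n := ⟨n - r, by omega⟩ with hx
  have hxval : (x : ℕ) = n - r := rfl
  have hcardperm : ∀ y : ℝ,
      (Finset.univ.filter (fun i : Fin n => y ≤ a i)).card
        = (Finset.univ.filter (fun i : Fin n => y ≤ b i)).card := by
    intro y
    rw [Finset.card_filter, Finset.card_filter]
    exact (Equiv.sum_comp σ (fun i => if y ≤ a i then 1 else 0)).symm
  have hkey2 : ∀ y : ℝ,
      (r ≤ (Finset.univ.filter (fun i : Fin n => y ≤ b i)).card) ↔ y ≤ b x := by
    intro y
    constructor
    · intro hc
      by_contra hy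
      push_neg at hy
      have hsub : Finset.univ.filter (fun i : Fin n => y ≤ b i) ⊆ Finset.Ioi x := by
        intro i hi
        simp only [Finset.mem_filter, Finset.mem_univ, true_and] at hi
        rw [Finset.mem_Ioi]
        by_contra hle
        push_neg at hle
        exact absurd (hi.trans (hmono hle)) (not_le.mpr hy)
      have hle := Finset.card_le_card hsub
      rw [Fin.card_Ioi, hxval] at hle
      omega
    · intro hy
      have hsub : Finset.Ici x ⊆ Finset.univ.filter (fun i : Fin n => y ≤ b i) := by
        intro i hi
        rw [Finset.mem_Ici] at hi
        simp only [Finset.mem_filter, Finset.mem_univ, true_and]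
        exact hy.trans (hmono hi)
      have hle := Finset.card_le_card hsub
      rw [Fin.card_Ici, hxval] at hle
      omega
  -- floor facts
  have hfl : ((r : ℝ)) ≤ ((n : ℝ) + 1) * α := by
    have h1 := Int.floor_le (((n : ℝ) + 1) * α)
    rw [← hr] at h1
    exact_mod_cast h1
  have hfu : ((n : ℝ) + 1) * α < (r : ℝ) + 1 := by
    have h1 := Int.lt_floor_add_one (((n : ℝ) + 1) * α)
    rw [← hr] at h1
    exact_mod_cast h1
  ext y
  simp only [Set.mem_setOf_eq, Set.mem_Iic]
  rw [key y, hcardperm y]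
  constructor
  · intro hlt
    apply (hkey2 y).mp
    set c := (Finset.univ.filter (fun i : Fin n => y ≤ b i)).card with hc
    have h1 : (r : ℝ) < (c : ℝ) + 1 := by
      push_cast at hlt
      linarith
    exact_mod_cast Nat.lt_succ_iff.mp (by exact_mod_cast h1)
  · intro hy
    have hc := (hkey2 y).mpr hy
    set c := (Finset.univ.filter (fun i : Fin n => y ≤ b i)).card with hcdef
    have : (r : ℝ) ≤ (c : ℝ) := by exact_mod_cast hc
    push_cast
    linarith
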